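/- Suppose 0 < f < p < 1 with q = 1 - p. Then: (i) the ratio B_{n,f·n}(p)/b_{n,f·n}(p) is strictly increasing in n over positive integers n for which f·n is a nonnegative integer; (ii) for every positive integer n, B_{n,⌊f·n⌋}(p)/b_{n,⌊f·n⌋}(p) < (1-f)·p/(p-f); and (iii) lim_{n→∞} B_{n,⌊f·n⌋}(p)/b_{n,⌊f·n⌋}(p) = (1-f)·p/(p-f). -/

import Mathlib

open Real Filter

/-- Binomial probability `b_{n,k}(p)`. -/
noncomputable def b (n k : ℕ) (p : ℝ) : ℝ :=
  (n.choose k : ℝ) * p ^ k * (1 - p) ^ (n - k)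

/-- Lower tail probability `B_{n,k}(p)`. -/
noncomputable def B (n k : ℕ) (p : ℝ) : ℝ :=
  ∑ j ∈ Finset.range (k + 1), (n.choose j : ℝ) * p ^ j * (1 - p) ^ (n - j)

noncomputable def g (p : ℝ) (n k i : ℕ) : ℝ :=
  ∏ s ∈ Finset.range i, (((k : ℝ) - s) * (1 - p)) / (p * ((n : ℝ) - k + 1 + s))

lemma b_pos {p : ℝ} (hp0 : 0 < p) (hp1 : p < 1) {n k : ℕ} (hkn : k ≤ n) :
    0 < b n k p := by
  unfold b
  have h1 : 0 < (n.choose k : ℝ) := by exact_mod_cast Nat.choose_pos hkn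
  have h2 : 0 < 1 - p := by linarith
  positivity

lemma b_pred {p : ℝ} (hp0 : 0 < p) {n j : ℕ} (hj1 : 1 ≤ j) (hjn : j ≤ n) :
    b n (j - 1) p = b n j p * ((((j : ℝ)) * (1 - p)) / (p * ((n : ℝ) - (j : ℝ) + 1))) := by
  obtain ⟨j', rfl⟩ : ∃ j', j = j' + 1 := ⟨j - 1, by omega⟩
  have hc : (n.choose (j' + 1) : ℝ) * ((j' : ℝ) + 1) = (n.choose j' : ℝ) * ((n : ℝ) - j') := by
    rw [← Nat.cast_sub (by omega : j' ≤ n)]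
    exact_mod_cast Nat.choose_succ_right_eq n j'
  have he : n - j' = (n - (j' + 1)) + 1 := by omega
  have hj'n : ((j' : ℝ)) + 1 ≤ (n : ℝ) := by exact_mod_cast hjn
  have hden : (0 : ℝ) < (n : ℝ) - ((j' + 1 : ℕ) : ℝ) + 1 := by push_cast; linarith
  unfold b
  simp only [Nat.add_sub_cancel]
  rw [he, pow_succ, pow_succ]
  push_cast at hden ⊢
  rw [mul_div_assoc', eq_div_iff (mul_pos hp0 hden).ne']
  linear_combination (-(p ^ j') * p * (1 - p) ^ (n - (j' + 1)) * (1 - p)) * hc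

lemma b_eq_g {p : ℝ} (hp0 : 0 < p) {n k i : ℕ} (hik : i ≤ k) (hkn : k ≤ n) :
    b n (k - i) p = b n k p * g p n k i := by
  induction i with
  | zero => simp [g]
  | succ i ih =>
    have hik' : i ≤ k := by omega
    have h1 : k - (i + 1) = (k - i) - 1 := by omega
    have h2 : 1 ≤ k - i := by omega
    have h3 : k - i ≤ n := by omega
    have hcast : ((k - i : ℕ) : ℝ) = (k : ℝ) - i := by
      rw [Nat.cast_sub hik']
    rw [h1, b_pred hp0 h2 h3, ih hik', hcast]
    unfold g
    rw [Finset.prod_range_succ]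
    ring

lemma B_eq {p : ℝ} (hp0 : 0 < p) {n k : ℕ} (hkn : k ≤ n) :
    B n k p = b n k p * ∑ i ∈ Finset.range (k + 1), g p n k i := by
  have h1 : B n k p = ∑ j ∈ Finset.range (k + 1), b n j p := rfl
  rw [h1, ← Finset.sum_range_reflect, Finset.mul_sum]
  refine Finset.sum_congr rfl fun i hi => ?_
  have hi' : i ≤ k := by
    have := Finset.mem_range.mp hi; omega
  have h2 : k + 1 - 1 - i = k - i := by omega
  rw [h2, b_eq_g hp0 hi' hkn]

lemma ratio_eq {p : ℝ} (hp0 : 0 < p) (hp1 : p < 1) {n k : ℕ} (hkn : k ≤ n) :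
    B n k p / b n k p = ∑ i ∈ Finset.range (k + 1), g p n k i := by
  rw [B_eq hp0 hkn, mul_comm, mul_div_assoc, div_self (b_pos hp0 hp1 hkn).ne', mul_one]

section bounds

variable {f p : ℝ} (hf0 : 0 < f) (hfp : f < p) (hp1 : p < 1)

lemma g_pos {p : ℝ} (hp0 : 0 < p) (hp1 : p < 1) {n k i : ℕ} (hik : i ≤ k) (hkn : k ≤ n) :
    0 < g p n k i := by
  unfold g
  refine Finset.prod_pos fun s hs => ?_
  have hs' : s < i := Finset.mem_range.mp hs
  have h1 : (s : ℝ) < k := by exact_mod_cast by omega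
  have h2 : (k : ℝ) ≤ n := by exact_mod_cast hkn
  have hq : 0 < 1 - p := by linarith
  apply div_pos (by nlinarith) (by nlinarith)

include hf0 hfp hp1 in
lemma factor_lt {n k s : ℕ} (hk : (k : ℝ) ≤ f * n) (hkn : k ≤ n) (hsk : s < k) :
    ((k : ℝ) - s) * (1 - p) / (p * ((n : ℝ) - k + 1 + s)) < f * (1 - p) / ((1 - f) * p) := by
  have hp0 : 0 < p := lt_trans hf0 hfp
  have hq : 0 < 1 - p := by linarith
  have hf1 : f < 1 := by linarith
  have h2 : (k : ℝ) ≤ n := by exact_mod_cast hkn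
  have hs0 : (0 : ℝ) ≤ s := Nat.cast_nonneg s
  rw [div_lt_div_iff₀ (by nlinarith) (by nlinarith)]
  have key : (0 : ℝ) < f * n - k + f + s := by linarith
  nlinarith [mul_pos (mul_pos hp0 hq) key]

include hf0 hfp hp1 in
lemma g_le_pow {n k i : ℕ} (hk : (k : ℝ) ≤ f * n) (hkn : k ≤ n) (hik : i ≤ k) :
    g p n k i ≤ (f * (1 - p) / ((1 - f) * p)) ^ i := by
  have hp0 : 0 < p := lt_trans hf0 hfp
  have hq : 0 < 1 - p := by linarith
  calc g p n k i ≤ ∏ _s ∈ Finset.range i, (f * (1 - p) / ((1 - f) * p)) := ?_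
    _ = (f * (1 - p) / ((1 - f) * p)) ^ i := by
        rw [Finset.prod_const, Finset.card_range]
  unfold g
  refine Finset.prod_le_prod (fun s hs => ?_) (fun s hs => ?_)
  · have hs' : s < i := Finset.mem_range.mp hs
    have h1 : (s : ℝ) < k := by exact_mod_cast by omega
    have h2 : (k : ℝ) ≤ n := by exact_mod_cast hkn
    have hq2 : (0:ℝ) ≤ 1 - p := hq.le
    exact div_nonneg (by nlinarith) (by nlinarith)
  · exact (factor_lt hf0 hfp hp1 hk hkn (by have := Finset.mem_range.mp hs; omega)).le

lemma x_lt_one (hf0 : 0 < f) (hfp : f < p) (hp1 : p < 1) :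
    f * (1 - p) / ((1 - f) * p) < 1 := by
  have hp0 : 0 < p := lt_trans hf0 hfp
  have hf1 : f < 1 := by linarith
  rw [div_lt_one (by nlinarith)]
  nlinarith

lemma x_pos (hf0 : 0 < f) (hfp : f < p) (hp1 : p < 1) :
    0 < f * (1 - p) / ((1 - f) * p) := by
  have hp0 : 0 < p := lt_trans hf0 hfp
  have hf1 : f < 1 := by linarith
  have hq : 0 < 1 - p := by linarith
  exact div_pos (by nlinarith) (by nlinarith)

include hf0 hfp hp1 in
lemma sum_g_lt {n k : ℕ} (hk : (k : ℝ) ≤ f * n) (hkn : k ≤ n) :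
    ∑ i ∈ Finset.range (k + 1), g p n k i < (1 - f) * p / (p - f) := by
  set x := f * (1 - p) / ((1 - f) * p) with hxdef
  have hx0 := x_pos hf0 hfp hp1
  have hx1 := x_lt_one hf0 hfp hp1
  have hp0 : 0 < p := lt_trans hf0 hfp
  have hf1 : f < 1 := by linarith
  have h1 : ∑ i ∈ Finset.range (k + 1), g p n k i ≤ ∑ i ∈ Finset.range (k + 1), x ^ i :=
    Finset.sum_le_sum fun i hi =>
      g_le_pow hf0 hfp hp1 hk hkn (by have := Finset.mem_range.mp hi; omega)
  have h1x : (0:ℝ) < 1 - x := by linarith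
  have hpf : (0:ℝ) < p - f := by linarith
  have h1f : (1 : ℝ) - f ≠ 0 := by linarith
  have hfin : (1 - x) * ((1 - f) * p / (p - f)) = 1 := by
    rw [hxdef]
    field_simp
    ring
  have h3 : (1 - x) * (∑ i ∈ Finset.range (k + 1), x ^ i) < 1 := by
    rw [mul_neg_geom_sum]
    nlinarith [pow_pos hx0 (k + 1)]
  have h4 : (1 - x) * (∑ i ∈ Finset.range (k + 1), x ^ i) <
      (1 - x) * ((1 - f) * p / (p - f)) := by rw [hfin]; exact h3
  exact lt_of_le_of_lt h1 ((mul_lt_mul_iff_right₀ h1x).mp h4)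

end bounds

section mono

variable {f p : ℝ} (hf0 : 0 < f) (hfp : f < p) (hp1 : p < 1)

include hf0 hfp hp1 in
lemma factor_mono {m n km kn s : ℕ} (hkm : (km : ℝ) = f * m) (hkn : (kn : ℝ) = f * n)
    (hmn : m ≤ n) (hkmm : km ≤ m) (hknn : kn ≤ n) (hskm : s < km) :
    ((km : ℝ) - s) * (1 - p) / (p * ((m : ℝ) - km + 1 + s)) ≤
      ((kn : ℝ) - s) * (1 - p) / (p * ((n : ℝ) - kn + 1 + s)) := by
  have hp0 : 0 < p := lt_trans hf0 hfp
  have hq : 0 < 1 - p := by linarith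
  have h1 : (km : ℝ) ≤ m := by exact_mod_cast hkmm
  have h2 : (kn : ℝ) ≤ n := by exact_mod_cast hknn
  have h3 : (m : ℝ) ≤ n := by exact_mod_cast hmn
  have hs0 : (0 : ℝ) ≤ s := Nat.cast_nonneg s
  rw [div_le_div_iff₀ (by nlinarith) (by nlinarith)]
  rw [hkm, hkn]
  have key : (0 : ℝ) ≤ ((n : ℝ) - m) * (f + s) := by
    apply mul_nonneg (by linarith) (by linarith)
  nlinarith [mul_nonneg (mul_nonneg hp0.le hq.le) key]

include hf0 hfp hp1 in
lemma g_mono {m n km kn i : ℕ} (hkm : (km : ℝ) = f * m) (hkn : (kn : ℝ) = f * n)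
    (hmn : m ≤ n) (hkmm : km ≤ m) (hknn : kn ≤ n) (hik : i ≤ km) :
    g p m km i ≤ g p n kn i := by
  have hp0 : 0 < p := lt_trans hf0 hfp
  have hq : 0 < 1 - p := by linarith
  unfold g
  refine Finset.prod_le_prod (fun s hs => ?_) (fun s hs => ?_)
  · have hs' : s < i := Finset.mem_range.mp hs
    have h1 : (s : ℝ) < km := by exact_mod_cast by omega
    have h2 : (km : ℝ) ≤ m := by exact_mod_cast hkmm
    exact div_nonneg (by nlinarith) (by nlinarith)
  · exact factor_mono hf0 hfp hp1 hkm hkn hmn hkmm hknn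
      (by have := Finset.mem_range.mp hs; omega)

end mono

section limit

variable {f p : ℝ} (hf0 : 0 < f) (hfp : f < p) (hp1 : p < 1)

/-- minimal factor -/
noncomputable def y (p : ℝ) (n k M : ℕ) : ℝ :=
  ((k : ℝ) - M) * (1 - p) / (p * ((n : ℝ) - k + 1 + M))

lemma pow_y_le_g {p : ℝ} (hp0 : 0 < p) (hp1 : p < 1) {n k M i : ℕ}
    (hMk : M ≤ k) (hkn : k ≤ n) (hiM : i ≤ M) :
    y p n k M ^ i ≤ g p n k i := by
  have hq : 0 < 1 - p := by linarith
  have h1 : (M : ℝ) ≤ k := by exact_mod_cast hMk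
  have h2 : (k : ℝ) ≤ n := by exact_mod_cast hkn
  calc y p n k M ^ i = ∏ _s ∈ Finset.range i, y p n k M := by
        rw [Finset.prod_const, Finset.card_range]
    _ ≤ g p n k i := ?_
  unfold g y
  refine Finset.prod_le_prod (fun s hs => ?_) (fun s hs => ?_)
  · exact div_nonneg (by nlinarith) (by nlinarith)
  · have hs' : (s : ℝ) ≤ M := by
      exact_mod_cast by have := Finset.mem_range.mp hs; omega
    apply div_le_div₀ (by nlinarith) (by nlinarith) (by nlinarith) (by nlinarith)

include hf0 hfp hp1 in
lemma y_tendsto (M : ℕ) :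
    Filter.Tendsto (fun n : ℕ => y p n ⌊f * n⌋₊ M) Filter.atTop
      (nhds (f * (1 - p) / ((1 - f) * p))) := by
  have hp0 : 0 < p := lt_trans hf0 hfp
  have hf1 : f < 1 := by linarith
  have hφ : Filter.Tendsto (fun n : ℕ => (⌊f * (n : ℝ)⌋₊ : ℝ) / n) Filter.atTop (nhds f) :=
    (tendsto_nat_floor_mul_div_atTop hf0.le).comp tendsto_natCast_atTop_atTop
  have hinv : Filter.Tendsto (fun n : ℕ => ((n : ℝ))⁻¹) Filter.atTop (nhds 0) :=
    tendsto_inv_atTop_zero.comp tendsto_natCast_atTop_atTop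
  have hF : Filter.Tendsto
      (fun n : ℕ => (((⌊f * (n : ℝ)⌋₊ : ℝ) / n - M * ((n : ℝ))⁻¹) * (1 - p)) /
        (p * (1 - (⌊f * (n : ℝ)⌋₊ : ℝ) / n + (1 + M) * ((n : ℝ))⁻¹)))
      Filter.atTop (nhds (((f - M * 0) * (1 - p)) / (p * (1 - f + (1 + M) * 0)))) := by
    apply Filter.Tendsto.div
    · exact ((hφ.sub (tendsto_const_nhds.mul hinv)).mul tendsto_const_nhds)
    · exact tendsto_const_nhds.mul
        ((tendsto_const_nhds.sub hφ).add (tendsto_const_nhds.mul hinv))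
    · simp only [mul_zero, add_zero]
      exact (mul_pos hp0 (by linarith : (0:ℝ) < 1 - f)).ne'
  have heq : ((f - M * 0) * (1 - p)) / (p * (1 - f + (1 + M) * 0)) =
      f * (1 - p) / ((1 - f) * p) := by ring
  rw [heq] at hF
  refine hF.congr' ?_
  filter_upwards [Filter.eventually_ge_atTop 1] with n hn
  have hnp : (0 : ℝ) < n := by exact_mod_cast by omega
  have hn0 : ((n : ℝ)) ≠ 0 := hnp.ne'
  have hfl : (⌊f * (n : ℝ)⌋₊ : ℝ) ≤ f * n := Nat.floor_le (by positivity)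
  unfold y
  have hd1 : (⌊f * (n : ℝ)⌋₊ : ℝ) / n ≤ f := by
    rw [div_le_iff₀ hnp]; exact hfl
  have hq : 0 < 1 - p := by linarith
  have hfn : (⌊f * (n : ℝ)⌋₊ : ℝ) ≤ n := by nlinarith
  set K := (⌊f * (n : ℝ)⌋₊ : ℝ) with hK
  have hM0 : (0:ℝ) ≤ M := Nat.cast_nonneg M
  have hden1 : (0:ℝ) < (n : ℝ) - K + 1 + M := by linarith
  have hden2 : (0:ℝ) < 1 - K / n + (1 + M) * ((n : ℝ))⁻¹ := by
    have h5 : (0:ℝ) < (1 + (M:ℝ)) * ((n : ℝ))⁻¹ := by positivity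
    linarith
  rw [eq_comm, div_eq_div_iff (mul_pos hp0 hden1).ne' (mul_pos hp0 hden2).ne']
  field_simp
  ring

end limit

section final

variable {f p : ℝ} (hf0 : 0 < f) (hfp : f < p) (hp1 : p < 1)

include hf0 hfp hp1 in
lemma S_tendsto :
    Filter.Tendsto (fun n : ℕ => ∑ i ∈ Finset.range (⌊f * n⌋₊ + 1), g p n ⌊f * n⌋₊ i)
      Filter.atTop (nhds ((1 - f) * p / (p - f))) := by
  have hp0 : 0 < p := lt_trans hf0 hfp
  have hf1 : f < 1 := by linarith
  have hq : 0 < 1 - p := by linarith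
  have hpf : (0:ℝ) < p - f := by linarith
  set x := f * (1 - p) / ((1 - f) * p) with hxdef
  have hx0 := x_pos hf0 hfp hp1
  have hx1 := x_lt_one hf0 hfp hp1
  have h1f : (0:ℝ) < 1 - f := by linarith
  have h1x : 1 - x = (p - f) / ((1 - f) * p) := by
    rw [hxdef, eq_div_iff (mul_pos h1f hp0).ne', sub_mul, one_mul,
      div_mul_cancel₀ _ (mul_pos h1f hp0).ne']
    ring
  have hL : (1 - x)⁻¹ = (1 - f) * p / (p - f) := by rw [h1x, inv_div]
  rw [tendsto_order]
  constructor
  · intro a ha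
    have hsum : Filter.Tendsto (fun N => ∑ i ∈ Finset.range N, x ^ i) Filter.atTop
        (nhds (1 - x)⁻¹) := (hasSum_geometric_of_lt_one hx0.le hx1).tendsto_sum_nat
    have ha' : a < (1 - x)⁻¹ := by rw [hL]; exact ha
    obtain ⟨N, hN⟩ := ((tendsto_order.1 hsum).1 a ha').exists
    have E1 : ∀ᶠ n : ℕ in Filter.atTop, N ≤ ⌊f * (n:ℝ)⌋₊ :=
      (tendsto_nat_floor_mul_atTop f hf0).eventually_ge_atTop N
    have hyt : Filter.Tendsto (fun n : ℕ => ∑ i ∈ Finset.range N, (y p n ⌊f * (n:ℝ)⌋₊ N) ^ i)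
        Filter.atTop (nhds (∑ i ∈ Finset.range N, x ^ i)) :=
      tendsto_finset_sum _ (fun i _ => (y_tendsto hf0 hfp hp1 N).pow i)
    have E2 := (tendsto_order.1 hyt).1 a hN
    filter_upwards [E1, E2] with n h1 h2
    have hkfn : ((⌊f * (n:ℝ)⌋₊ : ℝ)) ≤ f * n := Nat.floor_le (by positivity)
    have hn0 : (0:ℝ) ≤ (n:ℝ) := Nat.cast_nonneg n
    have hkn : ⌊f * (n:ℝ)⌋₊ ≤ n := by
      have h9 : ((⌊f * (n:ℝ)⌋₊ : ℝ)) ≤ (n : ℝ) := by nlinarith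
      exact_mod_cast h9
    calc a < ∑ i ∈ Finset.range N, (y p n ⌊f * (n:ℝ)⌋₊ N) ^ i := h2
      _ ≤ ∑ i ∈ Finset.range N, g p n ⌊f * (n:ℝ)⌋₊ i :=
          Finset.sum_le_sum fun i hi =>
            pow_y_le_g hp0 hp1 h1 hkn (le_of_lt (Finset.mem_range.mp hi))
      _ ≤ ∑ i ∈ Finset.range (⌊f * (n:ℝ)⌋₊ + 1), g p n ⌊f * (n:ℝ)⌋₊ i := by
          apply Finset.sum_le_sum_of_subset_of_nonneg
            (Finset.range_subset_range.mpr (by omega))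
          intro i hi _
          exact (g_pos hp0 hp1 (by have := Finset.mem_range.mp hi; omega) hkn).le
  · intro a ha
    filter_upwards [] with n
    have hkfn : ((⌊f * (n:ℝ)⌋₊ : ℝ)) ≤ f * n := Nat.floor_le (by positivity)
    have hn0 : (0:ℝ) ≤ (n:ℝ) := Nat.cast_nonneg n
    have hkn : ⌊f * (n:ℝ)⌋₊ ≤ n := by
      have h9 : ((⌊f * (n:ℝ)⌋₊ : ℝ)) ≤ (n : ℝ) := by nlinarith
      exact_mod_cast h9
    exact lt_trans (sum_g_lt hf0 hfp hp1 hkfn hkn) ha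

end final

theorem binomial_ratio_monotone_and_limit
    (f p : ℝ) (hf0 : 0 < f) (hfp : f < p) (hp1 : p < 1) :
    (∀ m n : ℕ, 0 < m → m < n →
      (⌊f * m⌋₊ : ℝ) = f * m → (⌊f * n⌋₊ : ℝ) = f * n →
      B m ⌊f * m⌋₊ p / b m ⌊f * m⌋₊ p < B n ⌊f * n⌋₊ p / b n ⌊f * n⌋₊ p) ∧
    (∀ n : ℕ, 0 < n →
      B n ⌊f * n⌋₊ p / b n ⌊f * n⌋₊ p < (1 - f) * p / (p - f)) ∧
    Tendsto (fun n : ℕ => B n ⌊f * n⌋₊ p / b n ⌊f * n⌋₊ p)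
      atTop (nhds ((1 - f) * p / (p - f))) := by
  have hp0 : 0 < p := lt_trans hf0 hfp
  have hf1 : f < 1 := by linarith
  refine ⟨?_, ?_, ?_⟩
  · intro m n hm hmn hfm hfn
    have hm0 : (0:ℝ) ≤ (m:ℝ) := Nat.cast_nonneg m
    have hn0 : (0:ℝ) ≤ (n:ℝ) := Nat.cast_nonneg n
    have hmn' : (m:ℝ) < (n:ℝ) := by exact_mod_cast hmn
    have hkmm : ⌊f * (m:ℝ)⌋₊ ≤ m := by
      have : ((⌊f * (m:ℝ)⌋₊ : ℝ)) ≤ (m:ℝ) := by rw [hfm]; nlinarith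
      exact_mod_cast this
    have hknn : ⌊f * (n:ℝ)⌋₊ ≤ n := by
      have : ((⌊f * (n:ℝ)⌋₊ : ℝ)) ≤ (n:ℝ) := by rw [hfn]; nlinarith
      exact_mod_cast this
    have hkk : ⌊f * (m:ℝ)⌋₊ < ⌊f * (n:ℝ)⌋₊ := by
      have : ((⌊f * (m:ℝ)⌋₊ : ℝ)) < ((⌊f * (n:ℝ)⌋₊ : ℝ)) := by
        rw [hfm, hfn]; nlinarith
      exact_mod_cast this
    rw [ratio_eq hp0 hp1 hkmm, ratio_eq hp0 hp1 hknn]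
    calc ∑ i ∈ Finset.range (⌊f * (m:ℝ)⌋₊ + 1), g p m ⌊f * (m:ℝ)⌋₊ i
        ≤ ∑ i ∈ Finset.range (⌊f * (m:ℝ)⌋₊ + 1), g p n ⌊f * (n:ℝ)⌋₊ i :=
          Finset.sum_le_sum fun i hi =>
            g_mono hf0 hfp hp1 hfm hfn hmn.le hkmm hknn
              (by have := Finset.mem_range.mp hi; omega)
      _ < ∑ i ∈ Finset.range (⌊f * (n:ℝ)⌋₊ + 1), g p n ⌊f * (n:ℝ)⌋₊ i := by
          apply Finset.sum_lt_sum_of_subset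
            (Finset.range_subset_range.mpr (by omega))
            (i := ⌊f * (m:ℝ)⌋₊ + 1)
            (Finset.mem_range.mpr (by omega))
            (by simp)
            (g_pos hp0 hp1 (by omega) hknn)
          intro j hj _
          exact (g_pos hp0 hp1 (by have := Finset.mem_range.mp hj; omega) hknn).le
  · intro n hn
    have hn0 : (0:ℝ) ≤ (n:ℝ) := Nat.cast_nonneg n
    have hkfn : ((⌊f * (n:ℝ)⌋₊ : ℝ)) ≤ f * n := Nat.floor_le (by positivity)
    have hkn : ⌊f * (n:ℝ)⌋₊ ≤ n := by
      have h9 : ((⌊f * (n:ℝ)⌋₊ : ℝ)) ≤ (n : ℝ) := by nlinarith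
      exact_mod_cast h9
    rw [ratio_eq hp0 hp1 hkn]
    exact sum_g_lt hf0 hfp hp1 hkfn hkn
  · refine (S_tendsto hf0 hfp hp1).congr' ?_
    filter_upwards [] with n
    have hn0 : (0:ℝ) ≤ (n:ℝ) := Nat.cast_nonneg n
    have hkfn : ((⌊f * (n:ℝ)⌋₊ : ℝ)) ≤ f * n := Nat.floor_le (by positivity)
    have hkn : ⌊f * (n:ℝ)⌋₊ ≤ n := by
      have h9 : ((⌊f * (n:ℝ)⌋₊ : ℝ)) ≤ (n : ℝ) := by nlinarith
      exact_mod_cast h9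
    exact (ratio_eq hp0 hp1 hkn).symm
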